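/- arXiv:1606.00760 — 3 statements merged into one kernel-verified Lean document; each statement's English description precedes it below -/
import Mathlib

section
/- The binomials 1 − X^a Y^b, for integers a ≥ 0 and b ≥ 1, freely generate a free abelian subgroup of the multiplicative group of the rational function field Q(X,Y): any finite product ∏ (1 − X^{a_i} Y^{b_i})^{e_i} with distinct pairs (a_i,b_i) and nonzero integer exponents e_i is not equal to 1. -/
open Polynomial

/-- The binomials `1 − X^a Y^b` (for `a ≥ 0`, `b ≥ 1`) freely generate a free abelian
subgroup of `ℚ(X,Y)^×`: any finite product `∏ (1 − X^{aᵢ} Y^{bᵢ})^{eᵢ}` over distinct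
pairs `(aᵢ, bᵢ)` with nonzero integer exponents `eᵢ` is not equal to `1`. -/
theorem binomials_multiplicatively_independent
    (s : Finset (ℕ × ℕ)) (e : ℕ × ℕ → ℤ)
    (hb : ∀ p ∈ s, 1 ≤ p.2) (he : ∀ p ∈ s, e p ≠ 0) (hne : s.Nonempty) :
    ∏ p ∈ s,
        ((1 : FractionRing (MvPolynomial (Fin 2) ℚ))
          - (algebraMap (MvPolynomial (Fin 2) ℚ) _ (MvPolynomial.X 0)) ^ p.1
            * (algebraMap (MvPolynomial (Fin 2) ℚ) _ (MvPolynomial.X 1)) ^ p.2) ^ (e p)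
      ≠ 1 := by
  classical
  intro h1
  set f : ℕ × ℕ → MvPolynomial (Fin 2) ℚ := fun p => 1 - MvPolynomial.X 0 ^ p.1 * MvPolynomial.X 1 ^ p.2 with hf
  have hfne : ∀ p ∈ s, f p ≠ 0 := by
    intro p hp h0
    have hb2 := hb p hp
    have h2 := congrArg MvPolynomial.constantCoeff h0
    rw [hf] at h2
    simp only [map_sub, map_one, map_mul, map_pow, MvPolynomial.constantCoeff_X,
      zero_pow (by omega : p.2 ≠ 0), mul_zero, sub_zero, map_zero] at h2
    exact one_ne_zero h2
  set u : ℕ × ℕ → FractionRing (MvPolynomial (Fin 2) ℚ) := fun p => algebraMap (MvPolynomial (Fin 2) ℚ) (FractionRing (MvPolynomial (Fin 2) ℚ)) (f p) with hu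
  have hu0 : ∀ p ∈ s, u p ≠ 0 := by
    intro p hp h0
    exact hfne p hp (IsFractionRing.injective (MvPolynomial (Fin 2) ℚ) (FractionRing (MvPolynomial (Fin 2) ℚ)) (by rw [map_zero]; exact h0))
  have h1' : ∏ p ∈ s, u p ^ e p = 1 := by
    rw [← h1]
    refine Finset.prod_congr rfl fun p hp => ?_
    simp [hu, hf, map_sub, map_one, map_mul, map_pow]
  set P := s.filter (fun p => 0 < e p) with hP
  set N := s.filter (fun p => ¬ 0 < e p) with hN
  have hNneg : ∀ p ∈ N, e p < 0 := by
    intro p hp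
    rw [hN, Finset.mem_filter] at hp
    have := he p hp.1
    omega
  have hsplit : (∏ p ∈ P, u p ^ e p) * ∏ p ∈ N, u p ^ e p = 1 := by
    rw [Finset.prod_filter_mul_prod_filter_not s _ (fun p => u p ^ e p)]
    exact h1'
  have hPeq : ∏ p ∈ P, u p ^ e p = ∏ p ∈ P, u p ^ (e p).toNat := by
    refine Finset.prod_congr rfl fun p hp => ?_
    rw [hP, Finset.mem_filter] at hp
    rw [← zpow_natCast]
    congr 1
    omega
  have hNeq : ∏ p ∈ N, u p ^ e p = (∏ p ∈ N, u p ^ (-(e p)).toNat)⁻¹ := by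
    rw [← Finset.prod_inv_distrib]
    refine Finset.prod_congr rfl fun p hp => ?_
    have := hNneg p hp
    rw [← zpow_natCast, ← zpow_neg]
    congr 1
    omega
  have hBne : (∏ p ∈ N, u p ^ (-(e p)).toNat) ≠ 0 := by
    refine Finset.prod_ne_zero_iff.mpr fun p hp => pow_ne_zero _ ?_
    exact hu0 p (Finset.mem_filter.mp hp).1
  have hAB : (∏ p ∈ P, u p ^ (e p).toNat) = ∏ p ∈ N, u p ^ (-(e p)).toNat := by
    rw [hPeq, hNeq] at hsplit
    field_simp at hsplit
    exact hsplit
  -- descend to polynomial identity in R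
  have hABR : (∏ p ∈ P, f p ^ (e p).toNat) = ∏ p ∈ N, f p ^ (-(e p)).toNat := by
    apply IsFractionRing.injective (MvPolynomial (Fin 2) ℚ) (FractionRing (MvPolynomial (Fin 2) ℚ))
    rw [map_prod, map_prod]
    simpa [hu, map_pow] using hAB
  -- substitute
  set Nb := s.sup Prod.snd + 1 with hNb
  have hNbpos : 0 < Nb := Nat.succ_pos _
  have hlt : ∀ p ∈ s, p.2 < Nb := fun p hp =>
    Nat.lt_succ_of_le (Finset.le_sup (f := Prod.snd) hp)
  set n : ℕ × ℕ → ℕ := fun p => Nb * p.1 + p.2 with hn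
  have hn1 : ∀ p ∈ s, 1 ≤ n p := fun p hp => le_trans (hb p hp) (Nat.le_add_left _ _)
  have hninj : ∀ p ∈ s, ∀ q ∈ s, n p = n q → p = q := by
    intro p hp q hq hnpq
    have h2 : p.2 = n p % Nb := by
      rw [hn]; simp only [Nat.mul_add_mod]; exact (Nat.mod_eq_of_lt (hlt p hp)).symm
    have h2' : q.2 = n q % Nb := by
      rw [hn]; simp only [Nat.mul_add_mod]; exact (Nat.mod_eq_of_lt (hlt q hq)).symm
    have hsnd : p.2 = q.2 := by rw [h2, h2', hnpq]
    have hfst : p.1 = q.1 := by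
      have hlin : Nb * p.1 + p.2 = Nb * q.1 + q.2 := hnpq
      rw [hsnd] at hlin
      exact Nat.eq_of_mul_eq_mul_left hNbpos (Nat.add_right_cancel hlin)
    exact Prod.ext hfst hsnd
  set φ : MvPolynomial (Fin 2) ℚ →+* Polynomial ℂ :=
    MvPolynomial.eval₂Hom (algebraMap ℚ (Polynomial ℂ)) ![X ^ Nb, X] with hφ
  have hφf : ∀ p : ℕ × ℕ, φ (f p) = 1 - X ^ n p := by
    intro p
    rw [hf, hφ]
    simp only [map_sub, map_one, map_mul, map_pow, MvPolynomial.eval₂Hom_X',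
      Matrix.cons_val_zero, Matrix.cons_val_one, Matrix.head_cons]
    simp only [hn]
    rw [← pow_mul, ← pow_add]
  have hABC : (∏ p ∈ P, ((1 : Polynomial ℂ) - X ^ n p) ^ (e p).toNat)
      = ∏ p ∈ N, ((1 : Polynomial ℂ) - X ^ n p) ^ (-(e p)).toNat := by
    have := congrArg φ hABR
    rw [map_prod, map_prod] at this
    simpa only [map_pow, hφf] using this
  -- nonvanishing
  have hg0 : ∀ m : ℕ, 1 ≤ m → ((1 : Polynomial ℂ) - X ^ m) ≠ 0 := by
    intro m hm h0
    have := congrArg (fun q => Polynomial.coeff q m) h0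
    simp only [coeff_sub, coeff_one, coeff_X_pow, if_pos rfl, if_neg (by omega : ¬ m = 0),
      coeff_zero] at this
    norm_num at this
  have hA0 : (∏ p ∈ P, ((1 : Polynomial ℂ) - X ^ n p) ^ (e p).toNat) ≠ 0 := by
    refine Finset.prod_ne_zero_iff.mpr fun p hp => pow_ne_zero _ ?_
    exact hg0 _ (hn1 p (Finset.mem_filter.mp hp).1)
  have hB0 : (∏ p ∈ N, ((1 : Polynomial ℂ) - X ^ n p) ^ (-(e p)).toNat) ≠ 0 := by
    refine Finset.prod_ne_zero_iff.mpr fun p hp => pow_ne_zero _ ?_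
    exact hg0 _ (hn1 p (Finset.mem_filter.mp hp).1)
  -- max element
  obtain ⟨p0, hp0s, hp0max⟩ := s.exists_max_image n hne
  set n0 := n p0 with hn0def
  have hn0pos : 0 < n0 := hn1 p0 hp0s
  set ζ : ℂ := Complex.exp (2 * Real.pi * Complex.I / n0) with hζdef
  have hζ : IsPrimitiveRoot ζ n0 := Complex.isPrimitiveRoot_exp n0 (by omega)
  have hcount : ∀ p ∈ s, Multiset.count ζ ((1 : Polynomial ℂ) - X ^ n p).roots
      = if p = p0 then 1 else 0 := by
    intro p hp
    by_cases hpp : p = p0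
    · subst hpp
      rw [if_pos rfl]
      have hneg : (1 : Polynomial ℂ) - X ^ n p = -(X ^ n p - C 1) := by
        rw [map_one]; ring
      rw [hneg, roots_neg]
      have : (X ^ n p - C (1 : ℂ)).roots = nthRoots (n p) 1 := rfl
      rw [this]
      exact Multiset.count_eq_one_of_mem hζ.nthRoots_one_nodup
        ((mem_nthRoots hn0pos).mpr hζ.pow_eq_one)
    · rw [if_neg hpp]
      rw [Multiset.count_eq_zero]
      intro hmem
      rw [mem_roots (hg0 _ (hn1 p hp))] at hmem
      have heval : (1 : ℂ) - ζ ^ n p = 0 := by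
        simpa [IsRoot] using hmem
      have hone : ζ ^ n p = 1 := by linear_combination -heval
      have hdvd : n0 ∣ n p := (hζ.pow_eq_one_iff_dvd _).mp hone
      have : n0 ≤ n p := Nat.le_of_dvd (hn1 p hp) hdvd
      have : n p = n0 := le_antisymm (hp0max p hp) this
      exact hpp (hninj p hp p0 hp0s this)
  have hcnt : ∀ (t : Finset (ℕ × ℕ)) (k : ℕ × ℕ → ℕ),
      (∏ p ∈ t, ((1 : Polynomial ℂ) - X ^ n p) ^ k p) ≠ 0 →
      Multiset.count ζ (∏ p ∈ t, ((1 : Polynomial ℂ) - X ^ n p) ^ k p).roots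
        = ∑ p ∈ t, k p * Multiset.count ζ ((1 : Polynomial ℂ) - X ^ n p).roots := by
    intro t k ht
    rw [roots_prod _ _ ht, Multiset.count_bind]
    simp only [roots_pow, Multiset.count_nsmul]
    rfl
  have hPcnt := hcnt P (fun p => (e p).toNat) hA0
  have hNcnt := hcnt N (fun p => (-(e p)).toNat) hB0
  have hsum : ∀ (t : Finset (ℕ × ℕ)) (k : ℕ × ℕ → ℕ), t ⊆ s →
      (∑ p ∈ t, k p * Multiset.count ζ ((1 : Polynomial ℂ) - X ^ n p).roots)
        = if p0 ∈ t then k p0 else 0 := by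
    intro t k hts
    rw [Finset.sum_congr rfl (fun p hp => by rw [hcount p (hts hp)])]
    simp only [mul_ite, mul_one, mul_zero]
    exact Finset.sum_ite_eq' t p0 k
  have hPsub : P ⊆ s := Finset.filter_subset _ _
  have hNsub : N ⊆ s := Finset.filter_subset _ _
  have hkey := congrArg (fun q => Multiset.count ζ q.roots) hABC
  rw [hPcnt, hNcnt, hsum P _ hPsub, hsum N _ hNsub] at hkey
  have hep0 := he p0 hp0s
  by_cases hpos : 0 < e p0
  · have hp0P : p0 ∈ P := Finset.mem_filter.mpr ⟨hp0s, hpos⟩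
    have hp0N : p0 ∉ N := fun h => by
      have := (Finset.mem_filter.mp h).2; exact this hpos
    rw [if_pos hp0P, if_neg hp0N] at hkey
    omega
  · have hp0P : p0 ∉ P := fun h => hpos (Finset.mem_filter.mp h).2
    have hp0N : p0 ∈ N := Finset.mem_filter.mpr ⟨hp0s, hpos⟩
    rw [if_neg hp0P, if_pos hp0N] at hkey
    omega
end

section
/- For two partitions λ, μ of positive integers: if W_λ(X,Y) = W_μ(X,Y) as rational functions, then λ = μ, where W_λ(X,Y) = 1/∏_{j=1}^{|λ|} (1 − X^{j−1} Y^{ind_λ(j)}). -/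
open Polynomial

/-! Auxiliary machinery: products of `1 - X^e` over a multiset of positive
exponents determine the multiset, and the multiset encoding of a partition
(via `Y ↦ X^N`) determines the partition. -/

/-- Product of `1 - X^e` over a multiset of exponents, in `ℚ[X]`. -/
noncomputable def prodP (S : Multiset ℕ) : ℚ[X] := (S.map fun e => 1 - (X:ℚ[X]) ^ e).prod

lemma coeff_zero_prodP (S : Multiset ℕ) (hS : ∀ e ∈ S, 0 < e) : (prodP S).coeff 0 = 1 := by
  rw [Polynomial.coeff_zero_eq_eval_zero, prodP, Polynomial.eval_multiset_prod]
  rw [Multiset.map_map]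
  refine Multiset.prod_eq_one ?_
  intro x hx
  simp only [Multiset.mem_map] at hx
  obtain ⟨e, he, rfl⟩ := hx
  simp [zero_pow (hS e he).ne']

lemma coeff_min_prodP (m : ℕ) (hm : 0 < m) : ∀ S : Multiset ℕ, (∀ e ∈ S, m ≤ e) →
    (prodP S).coeff m = -(S.count m : ℚ) := by
  intro S
  induction S using Multiset.induction_on with
  | empty => intro _; simp [prodP, Polynomial.coeff_one, hm.ne']
  | cons a s ih =>
    intro hS
    have ha : m ≤ a := hS a (Multiset.mem_cons_self a s)
    have hs : ∀ e ∈ s, m ≤ e := fun e he => hS e (Multiset.mem_cons_of_mem he)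
    have hpos : ∀ e ∈ s, 0 < e := fun e he => lt_of_lt_of_le hm (hs e he)
    have hexp : prodP (a ::ₘ s) = prodP s - X ^ a * prodP s := by
      rw [prodP, Multiset.map_cons, Multiset.prod_cons, sub_mul, one_mul, prodP]
    rw [hexp, Polynomial.coeff_sub, ih hs, Polynomial.coeff_X_pow_mul']
    rcases eq_or_lt_of_le ha with rfl | hlt
    · rw [if_pos le_rfl, Nat.sub_self, coeff_zero_prodP s hpos, Multiset.count_cons_self]
      push_cast; ring
    · rw [if_neg (not_le.mpr hlt), Multiset.count_cons_of_ne (by omega)]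
      ring

lemma prodP_inj : ∀ (n : ℕ) (S T : Multiset ℕ), Multiset.card S = n →
    (∀ e ∈ S, 0 < e) → (∀ e ∈ T, 0 < e) → prodP S = prodP T → S = T := by
  intro n
  induction n using Nat.strong_induction_on with
  | _ n ih =>
    intro S T hcard hS hT hP
    by_cases h0 : S + T = 0
    · rw [add_eq_zero] at h0
      rw [h0.1, h0.2]
    · have hex : ∃ m, m ∈ S + T := by
        rcases Multiset.exists_mem_of_ne_zero h0 with ⟨m, hm⟩
        exact ⟨m, hm⟩
      classical
      let m := Nat.find hex
      have hmem : m ∈ S + T := Nat.find_spec hex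
      have hmin : ∀ k ∈ S + T, m ≤ k := fun k hk => Nat.find_min' hex hk
      have hmpos : 0 < m := by
        rcases Multiset.mem_add.mp hmem with h | h
        · exact hS m h
        · exact hT m h
      have hSm : ∀ e ∈ S, m ≤ e := fun e he => hmin e (Multiset.mem_add.mpr (Or.inl he))
      have hTm : ∀ e ∈ T, m ≤ e := fun e he => hmin e (Multiset.mem_add.mpr (Or.inr he))
      have hcount : S.count m = T.count m := by
        have := congrArg (fun p => Polynomial.coeff p m) hP
        simp only [coeff_min_prodP m hmpos S hSm, coeff_min_prodP m hmpos T hTm, neg_inj] at this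
        exact_mod_cast this
      have hmS : m ∈ S := by
        rcases Multiset.mem_add.mp hmem with h | h
        · exact h
        · rw [← Multiset.count_pos, hcount, Multiset.count_pos]; exact h
      have hmT : m ∈ T := by rw [← Multiset.count_pos, ← hcount, Multiset.count_pos]; exact hmS
      have hScons := (Multiset.cons_erase hmS).symm
      have hTcons := (Multiset.cons_erase hmT).symm
      have hne : (1 - (X:ℚ[X]) ^ m) ≠ 0 := by
        intro h
        have := congrArg (fun p => Polynomial.coeff p 0) h
        simp only [Polynomial.coeff_sub, Polynomial.coeff_one, Polynomial.coeff_X_pow,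
          Polynomial.coeff_zero, if_neg hmpos.ne] at this
        simp [hmpos.ne'] at this
      have hP' : prodP (S.erase m) = prodP (T.erase m) := by
        have e1 : prodP S = (1 - (X:ℚ[X]) ^ m) * prodP (S.erase m) := by
          rw [prodP, hScons]; simp [Multiset.prod_cons, prodP]
        have e2 : prodP T = (1 - (X:ℚ[X]) ^ m) * prodP (T.erase m) := by
          rw [prodP, hTcons]; simp [Multiset.prod_cons, prodP]
        rw [e1, e2] at hP
        exact mul_left_cancel₀ hne hP
      have hcard' : Multiset.card (S.erase m) < n := by
        have := Multiset.card_erase_lt_of_mem hmS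
        omega
      have := ih _ hcard' (S.erase m) (T.erase m) rfl
        (fun e he => hS e (Multiset.mem_of_mem_erase he))
        (fun e he => hT e (Multiset.mem_of_mem_erase he)) hP'
      rw [hScons, hTcons, this]

/-- The multiset of exponents `σ_{i-1}(l) + j + N(i+1)` encoding a partition. -/
def Mset (N : ℕ) : List ℕ → Multiset ℕ
  | [] => 0
  | a :: t => (Multiset.range a).map (· + N) + (Mset N t).map (· + (a + N))

lemma Mset_ge (N : ℕ) : ∀ (l : List ℕ), ∀ e ∈ Mset N l, N ≤ e := by
  intro l
  induction l with
  | nil => intro e he; simp [Mset] at he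
  | cons a t ih =>
    intro e he
    rw [Mset, Multiset.mem_add] at he
    rcases he with h | h
    · obtain ⟨j, hj, rfl⟩ := Multiset.mem_map.mp h
      omega
    · obtain ⟨f, hf, rfl⟩ := Multiset.mem_map.mp h
      omega

lemma Mset_inj (N : ℕ) : ∀ (l₁ l₂ : List ℕ),
    (∀ a ∈ l₁, 0 < a) → (∀ a ∈ l₂, 0 < a) → l₁.sum ≤ N → l₂.sum ≤ N →
    Mset N l₁ = Mset N l₂ → l₁ = l₂ := by
  intro l₁
  induction l₁ with
  | nil =>
    intro l₂ _ h₂p _ _ h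
    cases l₂ with
    | nil => rfl
    | cons b t =>
      exfalso
      have hb : 0 < b := h₂p b List.mem_cons_self
      have : N ∈ Mset N ([] : List ℕ) := by
        rw [h, Mset, Multiset.mem_add]
        left
        exact Multiset.mem_map.mpr ⟨0, Multiset.mem_range.mpr hb, by omega⟩
      simp [Mset] at this
  | cons a s ih =>
    intro l₂ h₁p h₂p h₁sum h₂sum h
    cases l₂ with
    | nil =>
      exfalso
      have ha : 0 < a := h₁p a List.mem_cons_self
      have : N ∈ Mset N ([] : List ℕ) := by
        rw [← h, Mset, Multiset.mem_add]
        left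
        exact Multiset.mem_map.mpr ⟨0, Multiset.mem_range.mpr ha, by omega⟩
      simp [Mset] at this
    | cons b t =>
      have hsa : s.sum ≤ N := by simp at h₁sum; omega
      have hsb : t.sum ≤ N := by simp at h₂sum; omega
      have haN : a ≤ N := by simp at h₁sum; omega
      have hbN : b ≤ N := by simp at h₂sum; omega
      rw [Mset, Mset] at h
      have hfilt := congrArg (Multiset.filter (fun e => e < 2*N)) h
      have flt : ∀ (c : ℕ), c ≤ N → (l : List ℕ) →
          Multiset.filter (fun e => e < 2*N) ((Multiset.range c).map (· + N)
            + (Mset N l).map (· + (c + N))) = (Multiset.range c).map (· + N) := by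
        intro c hc l
        rw [Multiset.filter_add]
        have e1 : Multiset.filter (fun e => e < 2*N) ((Multiset.range c).map (· + N))
            = (Multiset.range c).map (· + N) := by
          refine Multiset.filter_eq_self.mpr ?_
          intro e he
          obtain ⟨j, hj, rfl⟩ := Multiset.mem_map.mp he
          rw [Multiset.mem_range] at hj
          omega
        have e2 : Multiset.filter (fun e => e < 2*N) ((Mset N l).map (· + (c + N)))
            = 0 := by
          refine Multiset.filter_eq_nil.mpr ?_
          intro e he
          obtain ⟨f, hf, rfl⟩ := Multiset.mem_map.mp he
          have := Mset_ge N l f hf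
          omega
        rw [e1, e2, add_zero]
      rw [flt a haN s, flt b hbN t] at hfilt
      have hab : a = b := by
        have := congrArg Multiset.card hfilt
        simpa using this
      subst hab
      have htail : (Mset N s).map (· + (a + N)) = (Mset N t).map (· + (a + N)) := by
        rw [hfilt] at h
        exact add_left_cancel h
      have hMst : Mset N s = Mset N t :=
        Multiset.map_injective (fun x y hxy => by omega) htail
      have := ih t (fun x hx => h₁p x (List.mem_cons_of_mem a hx))
        (fun x hx => h₂p x (List.mem_cons_of_mem a hx)) hsa hsb hMst
      rw [this]

lemma prodP_Mset (N : ℕ) : ∀ (l : List ℕ) (c : ℕ),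
    prodP ((Mset N l).map (· + c)) =
      ∏ i : Fin l.length, ∏ j : Fin (l.get i),
        (1 - (X:ℚ[X]) ^ (c + (l.take i).sum + (j:ℕ) + N*((i:ℕ)+1))) := by
  intro l
  induction l with
  | nil => intro c; simp [Mset, prodP]
  | cons a t ih =>
    intro c
    rw [Mset, Multiset.map_add, prodP, Multiset.map_add, Multiset.prod_add]
    have h1 : Multiset.prod ((((Multiset.range a).map (· + N)).map (· + c)).map
        (fun e => 1 - (X:ℚ[X]) ^ e))
        = ∏ j : Fin a, (1 - (X:ℚ[X]) ^ (c + (j:ℕ) + N)) := by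
      rw [Multiset.map_map, Multiset.map_map]
      rw [Fin.prod_univ_eq_prod_range (fun j => 1 - (X:ℚ[X]) ^ (c + j + N))]
      rw [Finset.prod_eq_multiset_prod]
      rw [Finset.range_val]
      refine congrArg Multiset.prod (Multiset.map_congr rfl ?_)
      intro j hj
      simp only [Function.comp_apply]
      congr 2
      omega
    have h2 : Multiset.prod ((((Mset N t).map (· + (a + N))).map (· + c)).map
        (fun e => 1 - (X:ℚ[X]) ^ e))
        = prodP ((Mset N t).map (· + (c + a + N))) := by
      rw [prodP, Multiset.map_map, Multiset.map_map, Multiset.map_map]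
      refine congrArg Multiset.prod (Multiset.map_congr rfl ?_)
      intro e he
      simp only [Function.comp_apply]
      congr 2
      omega
    rw [h1, h2, ih (c + a + N)]
    simp only [List.length_cons]
    rw [Fin.prod_univ_succ]
    simp only [List.get_cons_zero, List.get_cons_succ, Fin.val_zero, Fin.val_succ,
      List.take_zero, List.take_succ_cons, List.sum_cons, List.sum_nil]
    refine congrArg₂ (· * ·) ?_ ?_
    · exact Finset.prod_congr rfl fun j _ => by congr 2; omega
    · exact Finset.prod_congr rfl fun i _ => Finset.prod_congr rfl fun j _ => by congr 2; ring

/-- For a partition `λ` (given as a non-increasing list of positive integers), the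
rational function `W_λ(X,Y) = 1/∏_{j=1}^{|λ|} (1 − X^{j−1} Y^{ind_λ(j)})`, written in
the equivalent form `1/∏_{i=1}^{len λ}∏_{j=1}^{λᵢ} (1 − X^{σ_{i−1}(λ)+j−1} Y^i)`,
as an element of `ℚ(X,Y)`. -/
noncomputable def Wfun (l : List ℕ) : FractionRing (MvPolynomial (Fin 2) ℚ) :=
  ∏ i : Fin l.length, ∏ j : Fin (l.get i),
    ((1 : FractionRing (MvPolynomial (Fin 2) ℚ))
      - (algebraMap (MvPolynomial (Fin 2) ℚ) _ (MvPolynomial.X 0)) ^ ((l.take i).sum + (j : ℕ))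
        * (algebraMap (MvPolynomial (Fin 2) ℚ) _ (MvPolynomial.X 1)) ^ ((i : ℕ) + 1))⁻¹

/-- The numerator-free polynomial `∏_{i,j} (1 − X^{σ_{i−1}(l)+j} Y^{i+1})`. -/
noncomputable def Qpoly (l : List ℕ) : MvPolynomial (Fin 2) ℚ :=
  ∏ i : Fin l.length, ∏ j : Fin (l.get i),
    (1 - (MvPolynomial.X 0) ^ ((l.take i).sum + (j : ℕ)) * (MvPolynomial.X 1) ^ ((i : ℕ) + 1))

lemma Wfun_eq_inv (l : List ℕ) :
    Wfun l = (algebraMap (MvPolynomial (Fin 2) ℚ) (FractionRing (MvPolynomial (Fin 2) ℚ))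
      (Qpoly l))⁻¹ := by
  rw [Wfun, Qpoly, map_prod]
  rw [← Finset.prod_inv_distrib]
  refine Finset.prod_congr rfl fun i _ => ?_
  rw [map_prod, ← Finset.prod_inv_distrib]
  refine Finset.prod_congr rfl fun j _ => ?_
  rw [map_sub, map_one, map_mul, map_pow, map_pow]

lemma Qpoly_eq (l₁ l₂ : List ℕ) (h : Wfun l₁ = Wfun l₂) : Qpoly l₁ = Qpoly l₂ := by
  rw [Wfun_eq_inv, Wfun_eq_inv] at h
  have := inv_injective h
  exact IsFractionRing.injective (MvPolynomial (Fin 2) ℚ)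
    (FractionRing (MvPolynomial (Fin 2) ℚ)) this

/-- The substitution `X ↦ X`, `Y ↦ X^N`. -/
noncomputable def phi (N : ℕ) : MvPolynomial (Fin 2) ℚ →ₐ[ℚ] ℚ[X] :=
  MvPolynomial.aeval (fun k : Fin 2 => if k = 0 then (X : ℚ[X]) else X ^ N)

lemma phi_Qpoly (N : ℕ) (l : List ℕ) :
    phi N (Qpoly l) = ∏ i : Fin l.length, ∏ j : Fin (l.get i),
      (1 - (X:ℚ[X]) ^ ((l.take i).sum + (j:ℕ) + N*((i:ℕ)+1))) := by
  rw [Qpoly, map_prod]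
  refine Finset.prod_congr rfl fun i _ => ?_
  rw [map_prod]
  refine Finset.prod_congr rfl fun j _ => ?_
  rw [map_sub, map_one, map_mul, map_pow, map_pow]
  simp only [phi, MvPolynomial.aeval_X]
  norm_num
  rw [← pow_mul, ← pow_add]

lemma prodP_Mset' (N : ℕ) (l : List ℕ) : prodP (Mset N l) = phi N (Qpoly l) := by
  rw [phi_Qpoly]
  have h := prodP_Mset N l 0
  have hid : (Mset N l).map (· + 0) = Mset N l := by
    rw [show ((· + 0) : ℕ → ℕ) = id by funext x; simp, Multiset.map_id]
  rw [hid] at h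
  rw [h]
  exact Finset.prod_congr rfl fun i _ => Finset.prod_congr rfl fun j _ => by congr 2; omega

/-- For two partitions `λ, μ` of positive integers: if `W_λ(X,Y) = W_μ(X,Y)` as rational
functions, then `λ = μ`. -/
theorem Wfun_injective_on_partitions
    (l₁ l₂ : List ℕ)
    (h₁s : List.Pairwise (· ≥ ·) l₁) (h₁p : ∀ a ∈ l₁, 0 < a) (h₁n : 0 < l₁.sum)
    (h₂s : List.Pairwise (· ≥ ·) l₂) (h₂p : ∀ a ∈ l₂, 0 < a) (h₂n : 0 < l₂.sum)
    (hW : Wfun l₁ = Wfun l₂) : l₁ = l₂ := by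
  set N := l₁.sum + l₂.sum with hN
  have hNpos : 0 < N := by omega
  have hQ := Qpoly_eq l₁ l₂ hW
  have hprod : prodP (Mset N l₁) = prodP (Mset N l₂) := by
    rw [prodP_Mset', prodP_Mset', hQ]
  have hM : Mset N l₁ = Mset N l₂ := by
    refine prodP_inj (Multiset.card (Mset N l₁)) _ _ rfl ?_ ?_ hprod
    · exact fun e he => lt_of_lt_of_le hNpos (Mset_ge N l₁ e he)
    · exact fun e he => lt_of_lt_of_le hNpos (Mset_ge N l₂ e he)
  exact Mset_inj N l₁ l₂ h₁p h₂p (by omega) (by omega) hM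
end

section
/- Let g be a finite-dimensional non-abelian Lie algebra of maximal class over a field k of characteristic 0, of dimension n + 2 with n ≥ 1. Then there exists a basis (x₁, x₂, y₁, …, y_n) of g such that [x₁, x₂] = y₁, [x₁, y_i] = y_{i+1} for 1 ≤ i ≤ n−1, and [x₁, y_n] = 0. -/
open LieModule

section Aux

variable {K : Type*} [Field K] {M : Type*} [LieRing M] [LieAlgebra K M]

/-- Right bracket with a fixed element, as a linear map in the left argument. -/
noncomputable def brkAux (c : M) : M →ₗ[K] M where
  toFun a := ⁅a, c⁆
  map_add' a b := add_lie a b c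
  map_smul' t a := smul_lie t a c

@[simp] lemma brkAux_apply (c a : M) : brkAux (K := K) c a = ⁅a, c⁆ := rfl

end Aux

/-- Let `g` be a finite-dimensional non-abelian Lie algebra of maximal class over a
field `k` of characteristic `0`, of dimension `n + 2` with `n ≥ 1` (maximal class:
`g` is nilpotent of class `dim g − 1 = n + 1`).  Then there is a basis
`(x₁, x₂, y₁, …, y_n)` of `g` with `[x₁,x₂] = y₁`, `[x₁,yᵢ] = y_{i+1}` for
`1 ≤ i ≤ n−1`, and `[x₁,y_n] = 0`. -/
theorem maximal_class_lie_algebra_good_basis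
    {k : Type*} [Field k] [CharZero k]
    {L : Type*} [LieRing L] [LieAlgebra k L]
    [Module.Finite k L]
    (n : ℕ) (hn : 1 ≤ n)
    (hdim : Module.finrank k L = n + 2)
    (hnonab : ¬ ∀ x y : L, ⁅x, y⁆ = 0)
    (hclass : lowerCentralSeries k L L (n + 1) = ⊥ ∧ lowerCentralSeries k L L n ≠ ⊥) :
    ∃ b : Module.Basis (Fin (n + 2)) k L,
      ⁅b 0, b 1⁆ = b ⟨2, by omega⟩ ∧
      (∀ (i : ℕ) (h2 : 2 ≤ i) (h3 : i + 1 < n + 2),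
        ⁅b 0, b ⟨i, by omega⟩⁆ = b ⟨i + 1, h3⟩) ∧
      ⁅b 0, b ⟨n + 1, by omega⟩⁆ = 0 := by
  classical
  obtain ⟨htopcl, hnebot⟩ := hclass
  set C : ℕ → LieSubmodule k L L := fun i => lowerCentralSeries k L L i with hCdef
  have htopcl' : C (n + 1) = ⊥ := htopcl
  have hnebot' : C n ≠ ⊥ := hnebot
  have hC0 : C 0 = ⊤ := rfl
  have hCsucc : ∀ i, C (i + 1) = ⁅(⊤ : LieIdeal k L), C i⁆ := fun i =>
    LieModule.lowerCentralSeries_succ k L L i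
  have hCanti : Antitone C := antitone_lowerCentralSeries k L L
  have hC2 : C 2 = ⁅(⊤ : LieIdeal k L), C 1⁆ := hCsucc 1
  -- stabilization of the lower central series
  have hstab : ∀ i, C i ≤ C (i + 1) → ∀ j, i ≤ j → C j = C i := by
    intro i hle j hij
    induction j with
    | zero =>
      have : i = 0 := Nat.le_zero.mp hij
      simp [this]
    | succ m ih =>
      rcases Nat.lt_or_ge i (m + 1) with h | h
      · have hm : i ≤ m := Nat.lt_succ_iff.mp h
        have hem := ih hm
        calc C (m + 1) = ⁅(⊤ : LieIdeal k L), C m⁆ := hCsucc m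
          _ = ⁅(⊤ : LieIdeal k L), C i⁆ := by rw [hem]
          _ = C (i + 1) := (hCsucc i).symm
          _ = C i := le_antisymm (hCanti (Nat.le_succ i)) hle
      · have : m + 1 = i := le_antisymm h hij
        rw [this]
  have hstrict : ∀ i, i ≤ n → C (i + 1) < C i := by
    intro i hi
    rcases lt_or_eq_of_le (hCanti (Nat.le_succ i)) with h | h
    · exact h
    · exfalso
      have e1 := hstab i h.ge n hi
      have e2 := hstab i h.ge (n + 1) (by omega)
      exact hnebot' (by rw [e1, ← e2, htopcl'])
  set D : ℕ → Submodule k L := fun i => (C i : Submodule k L) with hDdef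
  have hDmem : ∀ {i : ℕ} {x : L}, x ∈ D i ↔ x ∈ C i := fun {i x} =>
    LieSubmodule.mem_toSubmodule (C i)
  have hDle : ∀ {i j : ℕ}, i ≤ j → D j ≤ D i := fun {i j} h =>
    (LieSubmodule.toSubmodule_le_toSubmodule _ _).mpr (hCanti h)
  have hDlt : ∀ i, i ≤ n → D (i + 1) < D i := by
    intro i hi
    refine lt_of_le_of_ne (hDle (Nat.le_succ i)) ?_
    intro h
    exact (hstrict i hi).ne ((LieSubmodule.toSubmodule_inj _ _).mp h)
  have hD0 : D 0 = ⊤ := by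
    rw [hDdef]
    exact congrArg _ hC0 |>.trans LieSubmodule.top_toSubmodule
  have hDbot : D (n + 1) = ⊥ := by
    apply le_bot_iff.mp
    intro z hz
    have hz' : z ∈ C (n + 1) := hDmem.mp hz
    rw [htopcl'] at hz'
    exact (Submodule.mem_bot k).mpr ((LieSubmodule.mem_bot z).mp hz')
  -- lower bounds for the dimensions
  have hlow : ∀ m, ∀ j, j + m = n + 1 → m ≤ Module.finrank k (D j) := by
    intro m
    induction m with
    | zero => intro j _; exact Nat.zero_le _
    | succ p ih =>
      intro j hj
      have h1 : p ≤ Module.finrank k (D (j + 1)) := ih (j + 1) (by omega)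
      have h2 : Module.finrank k (D (j + 1)) < Module.finrank k (D j) :=
        Submodule.finrank_lt_finrank_of_lt (hDlt j (by omega))
      omega
  -- the first quotient has dimension 2 : `finrank (D 1) ≤ n`
  have hD1 : Module.finrank k (D 1) ≤ n := by
    by_contra hcon
    push_neg at hcon
    obtain ⟨x, hx⟩ : ∃ x : L, x ∉ D 1 := by
      have hne : D 1 ≠ ⊤ := by
        intro h
        have hlt := hDlt 0 (by omega)
        rw [h, hD0] at hlt
        exact lt_irrefl _ hlt
      by_contra hall
      push_neg at hall
      exact hne (Submodule.eq_top_iff'.mpr hall)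
    have hStop : Submodule.span k {x} ⊔ D 1 = ⊤ := by
      apply Submodule.eq_top_of_finrank_eq
      have hlt : D 1 < Submodule.span k {x} ⊔ D 1 := by
        refine lt_of_le_of_ne le_sup_right fun h => hx ?_
        rw [h]
        exact Submodule.mem_sup_left (Submodule.mem_span_singleton_self x)
      have f1 := Submodule.finrank_lt_finrank_of_lt hlt
      have f2 : Module.finrank k ↥(Submodule.span k {x} ⊔ D 1) ≤ Module.finrank k L :=
        Submodule.finrank_le _
      rw [hdim]
      have f3 : Module.finrank k (D 1) < Module.finrank k (D 0) :=
        Submodule.finrank_lt_finrank_of_lt (hDlt 0 (by omega))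
      have f4 : Module.finrank k (D 0) = n + 2 := by
        rw [hD0, finrank_top, hdim]
      omega
    have hC12 : C 1 ≤ C 2 := by
      have h1 : C 1 = ⁅(⊤ : LieIdeal k L), (⊤ : LieSubmodule k L L)⁆ := by
        rw [hCsucc 0, hC0]
      rw [h1, LieSubmodule.lie_le_iff]
      intro u _ v hv2
      have hu : u ∈ Submodule.span k {x} ⊔ D 1 := by rw [hStop]; exact Submodule.mem_top
      have hv : v ∈ Submodule.span k {x} ⊔ D 1 := by rw [hStop]; exact Submodule.mem_top
      obtain ⟨su, hsu, cu, hcu, hueq⟩ := Submodule.mem_sup.mp hu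
      obtain ⟨sv, hsv, dv, hdv, hveq⟩ := Submodule.mem_sup.mp hv
      obtain ⟨α, rfl⟩ := Submodule.mem_span_singleton.mp hsu
      obtain ⟨β, rfl⟩ := Submodule.mem_span_singleton.mp hsv
      have hcu' : cu ∈ C 1 := hDmem.mp hcu
      have hdv' : dv ∈ C 1 := hDmem.mp hdv
      have m1 : ⁅α • x, β • x⁆ ∈ C 2 := by
        have : ⁅α • x, β • x⁆ = (0 : L) := by
          rw [smul_lie, lie_smul, lie_self, smul_zero, smul_zero]
        rw [this]
        exact (C 2).zero_mem
      have m2 : ⁅α • x, dv⁆ ∈ C 2 := by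
        rw [smul_lie, hC2]
        exact SMulMemClass.smul_mem _ (LieSubmodule.lie_mem_lie (LieSubmodule.mem_top x) hdv')
      have m3 : ⁅cu, β • x⁆ ∈ C 2 := by
        have h3 : ⁅cu, β • x⁆ = -⁅β • x, cu⁆ := (lie_skew cu (β • x)).symm
        rw [h3, smul_lie, hC2]
        exact neg_mem (SMulMemClass.smul_mem _
          (LieSubmodule.lie_mem_lie (LieSubmodule.mem_top x) hcu'))
      have m4 : ⁅cu, dv⁆ ∈ C 2 := by
        rw [hC2]
        exact LieSubmodule.lie_mem_lie (LieSubmodule.mem_top cu) hdv'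
      rw [← hueq, ← hveq, add_lie, lie_add, lie_add]
      exact add_mem (add_mem m1 m2) (add_mem m3 m4)
    have e1 := hstab 1 hC12 n hn
    have e2 := hstab 1 hC12 (n + 1) (by omega)
    exact hnebot' (by rw [e1, ← e2, htopcl'])
  -- upper bounds and exact values of dimensions
  have hup : ∀ j, 1 ≤ j → j ≤ n + 1 → Module.finrank k (D j) + j ≤ n + 1 := by
    intro j h1
    induction j, h1 using Nat.le_induction with
    | base => intro _; omega
    | succ m hm ih =>
      intro hle
      have h2 : Module.finrank k (D (m + 1)) < Module.finrank k (D m) :=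
        Submodule.finrank_lt_finrank_of_lt (hDlt m (by omega))
      have h3 := ih (by omega)
      omega
  have hFr : ∀ j, 1 ≤ j → j ≤ n + 1 → Module.finrank k (D j) = n + 1 - j := by
    intro j h1 h2
    have := hlow (n + 1 - j) j (by omega)
    have := hup j h1 h2
    omega
  -- the bad subspaces
  let B : Fin n → Submodule k L := fun i =>
    ⨅ c : (D (i : ℕ)), Submodule.comap (brkAux (K := k) (c : L)) (D ((i : ℕ) + 2))
  have hBmem : ∀ (i : Fin n) (a : L),
      a ∈ B i ↔ ∀ c ∈ D (i : ℕ), ⁅a, c⁆ ∈ D ((i : ℕ) + 2) := by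
    intro i a
    simp only [B, Submodule.mem_iInf, Subtype.forall, Submodule.mem_comap, brkAux_apply]
  have hBne : ∀ i : Fin n, B i ≠ ⊤ := by
    intro i h
    have hle : C ((i : ℕ) + 1) ≤ C ((i : ℕ) + 2) := by
      rw [hCsucc (i : ℕ), LieSubmodule.lie_le_iff]
      intro x _ m hm
      have := (hBmem i x).mp (by rw [h]; exact Submodule.mem_top) m (hDmem.mpr hm)
      exact hDmem.mp this
    exact (hstrict ((i : ℕ) + 1) (by omega)).not_ge hle
  -- a generic element avoiding all bad subspaces
  obtain ⟨a, ha⟩ : ∃ a : L, ∀ i : Fin n, a ∉ B i := by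
    by_contra hcon
    push_neg at hcon
    have hcov : ⋃ i, ((B i : Set L)) = Set.univ := by
      ext z
      simp only [Set.mem_iUnion, Set.mem_univ, iff_true, SetLike.mem_coe]
      exact hcon z
    obtain ⟨i, hi⟩ := Subspace.exists_eq_top_of_iUnion_eq_univ hcov
    exact hBne i hi
  obtain ⟨x2, -, hx2⟩ : ∃ c ∈ D 0, ⁅a, c⁆ ∉ D 2 := by
    have h := ha ⟨0, by omega⟩
    rw [hBmem] at h
    push_neg at h
    exact h
  -- the sequence y
  set y : ℕ → L := fun i => Nat.rec x2 (fun _ p => ⁅a, p⁆) i with hydef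
  have hy0 : y 0 = x2 := rfl
  have hys : ∀ i, y (i + 1) = ⁅a, y i⁆ := fun i => rfl
  have hymem : ∀ i, y i ∈ C i := by
    intro i
    induction i with
    | zero => rw [hC0]; exact LieSubmodule.mem_top _
    | succ m ih =>
      rw [hys, hCsucc]
      exact LieSubmodule.lie_mem_lie (LieSubmodule.mem_top a) ih
  -- the span fact
  have spanfact : ∀ i, 1 ≤ i → i ≤ n → y i ∉ C (i + 1) →
      D i = Submodule.span k {y i} ⊔ D (i + 1) := by
    intro i h1 h2 hni
    have hle : Submodule.span k {y i} ⊔ D (i + 1) ≤ D i :=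
      sup_le (Submodule.span_le.mpr (Set.singleton_subset_iff.mpr (hDmem.mpr (hymem i))))
        (hDle (Nat.le_succ i))
    refine (Submodule.eq_of_le_of_finrank_le hle ?_).symm
    have hlt : D (i + 1) < Submodule.span k {y i} ⊔ D (i + 1) := by
      refine lt_of_le_of_ne le_sup_right fun h => hni ?_
      have : y i ∈ D (i + 1) := by
        rw [h]; exact Submodule.mem_sup_left (Submodule.mem_span_singleton_self _)
      exact hDmem.mp this
    have h3 := Submodule.finrank_lt_finrank_of_lt hlt
    have e1 := hFr i h1 (by omega)
    have e2 := hFr (i + 1) (by omega) (by omega)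
    omega
  have hynot : ∀ i, 1 ≤ i → i ≤ n → y i ∉ C (i + 1) := by
    intro i h1
    induction i, h1 using Nat.le_induction with
    | base =>
      intro _ hmem
      exact hx2 (hDmem.mpr hmem)
    | succ j hj ih =>
      intro hle hmem
      have hyj : y j ∉ C (j + 1) := ih (by omega)
      have hsp := spanfact j hj (by omega) hyj
      obtain ⟨c, hc, hcn⟩ : ∃ c ∈ D j, ⁅a, c⁆ ∉ D (j + 2) := by
        have h := ha ⟨j, by omega⟩
        rw [hBmem] at h
        push_neg at h
        exact h
      apply hcn
      rw [hsp] at hc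
      obtain ⟨s, hs, z, hz, rfl⟩ := Submodule.mem_sup.mp hc
      obtain ⟨α, rfl⟩ := Submodule.mem_span_singleton.mp hs
      have hexp : ⁅a, α • y j + z⁆ = α • ⁅a, y j⁆ + ⁅a, z⁆ := by
        rw [lie_add, lie_smul]
      rw [hexp]
      apply Submodule.add_mem
      · exact Submodule.smul_mem _ _ (hDmem.mpr hmem)
      · refine hDmem.mpr ?_
        rw [hCsucc (j + 1)]
        exact LieSubmodule.lie_mem_lie (LieSubmodule.mem_top a) (hDmem.mp hz)
  -- the candidate basis vectors
  set v : Fin (n + 2) → L := fun j => Nat.rec a (fun m _ => y m) (j : ℕ) with hvdef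
  set T := Submodule.span k (Set.range v) with hTdef
  have hyT : ∀ m, m ≤ n → y m ∈ T := by
    intro m hm
    apply Submodule.subset_span
    exact ⟨⟨m + 1, by omega⟩, rfl⟩
  have haT : a ∈ T := Submodule.subset_span ⟨⟨0, by omega⟩, rfl⟩
  have hdown : ∀ p, ∀ i, 1 ≤ i → i + p = n + 1 → D i ≤ T := by
    intro p
    induction p with
    | zero =>
      intro i h1 h2
      have : i = n + 1 := by omega
      rw [this, hDbot]
      exact bot_le
    | succ q ih =>
      intro i h1 h2
      have hin : i ≤ n := by omega
      rw [spanfact i h1 hin (hynot i h1 hin)]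
      exact sup_le (Submodule.span_le.mpr (Set.singleton_subset_iff.mpr (hyT i hin)))
        (ih (i + 1) (by omega) (by omega))
  have hD1T : D 1 ≤ T := hdown n 1 le_rfl (by omega)
  -- x₂ and a are independent modulo D 1
  have hy1 : y 1 ∉ C 2 := hynot 1 le_rfl hn
  have hx2n1 : x2 ∉ D 1 := by
    intro hmem
    apply hy1
    show ⁅a, x2⁆ ∈ C 2
    rw [hC2]
    exact LieSubmodule.lie_mem_lie (LieSubmodule.mem_top a) (hDmem.mp hmem)
  have h1lt : D 1 < Submodule.span k {x2} ⊔ D 1 := by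
    refine lt_of_le_of_ne le_sup_right fun h => hx2n1 ?_
    rw [h]
    exact Submodule.mem_sup_left (Submodule.mem_span_singleton_self _)
  have hanotin : a ∉ Submodule.span k {x2} ⊔ D 1 := by
    intro hmem
    obtain ⟨s, hs, c, hc, hsum⟩ := Submodule.mem_sup.mp hmem
    obtain ⟨β, rfl⟩ := Submodule.mem_span_singleton.mp hs
    apply hy1
    show ⁅a, x2⁆ ∈ C 2
    have ha' : ⁅a, x2⁆ = β • ⁅x2, x2⁆ + ⁅c, x2⁆ := by
      rw [← hsum, add_lie, smul_lie]
    have hcx : ⁅c, x2⁆ = -⁅x2, c⁆ := (lie_skew c x2).symm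
    rw [ha', lie_self, smul_zero, zero_add, hcx, hC2]
    exact neg_mem (LieSubmodule.lie_mem_lie (LieSubmodule.mem_top x2) (hDmem.mp hc))
  have h2lt : (Submodule.span k {x2} ⊔ D 1) <
      Submodule.span k {a} ⊔ (Submodule.span k {x2} ⊔ D 1) := by
    refine lt_of_le_of_ne le_sup_right fun h => hanotin ?_
    rw [h]
    exact Submodule.mem_sup_left (Submodule.mem_span_singleton_self _)
  have htop2 : Submodule.span k {a} ⊔ (Submodule.span k {x2} ⊔ D 1) = ⊤ := by
    apply Submodule.eq_top_of_finrank_eq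
    have f1 : Module.finrank k (D 1) = n := by
      have := hFr 1 le_rfl (by omega); omega
    have f2 := Submodule.finrank_lt_finrank_of_lt h1lt
    have f3 := Submodule.finrank_lt_finrank_of_lt h2lt
    have f4 : Module.finrank k
        ↥(Submodule.span k {a} ⊔ (Submodule.span k {x2} ⊔ D 1)) ≤ Module.finrank k L :=
      Submodule.finrank_le _
    rw [hdim]
    omega
  have htopT : ⊤ ≤ T := by
    rw [← htop2]
    refine sup_le (Submodule.span_le.mpr (Set.singleton_subset_iff.mpr haT))
      (sup_le (Submodule.span_le.mpr (Set.singleton_subset_iff.mpr ?_)) hD1T)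
    exact hy0 ▸ hyT 0 (Nat.zero_le n)
  have hcard : Fintype.card (Fin (n + 2)) = Module.finrank k L := by
    simp [hdim]
  refine ⟨basisOfTopLeSpanOfCardEqFinrank v htopT hcard, ?_, ?_, ?_⟩
  · rw [coe_basisOfTopLeSpanOfCardEqFinrank]
    have e0 : v 0 = a := by
      show (Nat.rec a (fun m _ => y m) ((0 : Fin (n + 2)) : ℕ) : L) = a
      norm_num
    have e1 : v 1 = y 0 := by
      show (Nat.rec a (fun m _ => y m) ((1 : Fin (n + 2)) : ℕ) : L) = y 0
      norm_num
    have e2 : v ⟨2, by omega⟩ = y 1 := rfl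
    rw [e0, e1, e2]
    exact (hys 0).symm
  · intro i h2 h3
    rw [coe_basisOfTopLeSpanOfCardEqFinrank]
    obtain ⟨m, rfl⟩ : ∃ m, i = m + 2 := ⟨i - 2, by omega⟩
    have e0 : v 0 = a := by
      show (Nat.rec a (fun m _ => y m) ((0 : Fin (n + 2)) : ℕ) : L) = a
      norm_num
    have ei : v ⟨m + 2, by omega⟩ = y (m + 1) := rfl
    have ei' : v ⟨m + 2 + 1, h3⟩ = y (m + 2) := rfl
    rw [e0, ei, ei']
  · rw [coe_basisOfTopLeSpanOfCardEqFinrank]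
    have e0 : v 0 = a := by
      show (Nat.rec a (fun m _ => y m) ((0 : Fin (n + 2)) : ℕ) : L) = a
      norm_num
    have en : v ⟨n + 1, by omega⟩ = y n := rfl
    rw [e0, en, ← hys n]
    have := hymem (n + 1)
    rw [htopcl'] at this
    exact (LieSubmodule.mem_bot _).mp this
end
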